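/- For a 2×2 block matrix M indexed by a partition (a,b) of the index set with M_{aa} invertible, partial inversion with respect to a yields the block matrix with blocks (M_{aa}⁻¹, -M_{aa}⁻¹M_{ab}; M_{ba}M_{aa}⁻¹, M_{bb} - M_{ba}M_{aa}⁻¹M_{ab}). -/

import Mathlib

/-- Partial inversion of a square real matrix with respect to a single index `k`. -/
noncomputable def invStep {ι : Type*} [DecidableEq ι] (M : Matrix ι ι ℝ) (k : ι) : Matrix ι ι ℝ :=
  Matrix.of fun i j =>
    if i = k then (if j = k then 1 / M k k else - M k j / M k k)
    else if j = k then M i k / M k k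
    else M i j - M i k * M k j / M k k

/-- Partial inversion with respect to a sequence of indices, applied in order. -/
noncomputable def invList {ι : Type*} [DecidableEq ι] (l : List ι) (M : Matrix ι ι ℝ) : Matrix ι ι ℝ :=
  l.foldl invStep M

/-- All principal submatrices of `M` are invertible. -/
def allPrincipalInvertible {ι : Type*} [Fintype ι] [DecidableEq ι]
    (M : Matrix ι ι ℝ) : Prop :=
  ∀ s : Finset ι,
    (M.submatrix (fun i : s => (i : ι)) (fun i : s => (i : ι))).det ≠ 0

section Aux

variable {ι : Type*} [Fintype ι] [DecidableEq ι]

/-- The matrix with rows of `M` on `s` and standard basis rows elsewhere. -/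
def pmE (M : Matrix ι ι ℝ) (s : Finset ι) : Matrix ι ι ℝ :=
  Matrix.of fun i j => if i ∈ s then M i j else if i = j then 1 else 0

/-- The matrix with standard basis rows on `s` and rows of `M` elsewhere. -/
def pmF (M : Matrix ι ι ℝ) (s : Finset ι) : Matrix ι ι ℝ :=
  Matrix.of fun i j => if i ∈ s then (if i = j then 1 else 0) else M i j

lemma pmE_det_ne_zero (M : Matrix ι ι ℝ) (hM : allPrincipalInvertible M) (s : Finset ι) :
    (pmE M s).det ≠ 0 := by
  classical
  let e := Equiv.sumCompl (· ∈ s)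
  have h : (pmE M s).submatrix e e =
      Matrix.fromBlocks
        (M.submatrix (fun i : {x // x ∈ s} => (i : ι)) (fun i : {x // x ∈ s} => (i : ι)))
        (M.submatrix (fun i : {x // x ∈ s} => (i : ι)) (fun j : {x // ¬ x ∈ s} => (j : ι)))
        (0 : Matrix {x // ¬ x ∈ s} {x // x ∈ s} ℝ)
        (1 : Matrix {x // ¬ x ∈ s} {x // ¬ x ∈ s} ℝ) := by
    ext i j
    cases i with
    | inl i =>
      cases j with
      | inl j => simp [pmE, e, i.2]
      | inr j => simp [pmE, e, i.2]
    | inr i =>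
      cases j with
      | inl j =>
        have : (i : ι) ≠ (j : ι) := fun h => i.2 (h ▸ j.2)
        simp [pmE, e, i.2, this]
      | inr j =>
        simp [pmE, e, i.2, Matrix.one_apply, Subtype.ext_iff]
  have := Matrix.det_submatrix_equiv_self e (pmE M s)
  rw [← this, h, Matrix.det_fromBlocks_zero₂₁, Matrix.det_one, mul_one]
  exact hM s

lemma pmE_insert (M : Matrix ι ι ℝ) (s : Finset ι) (k : ι) (hk : k ∉ s) :
    pmE M (insert k s) = (pmE M s).updateRow k (M k) := by
  ext i j
  by_cases hik : i = k
  · subst hik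
    simp [pmE, Matrix.updateRow_self]
  · simp [pmE, Matrix.updateRow_ne hik, Finset.mem_insert, hik]

lemma det_updateRow_eq_sum (A : Matrix ι ι ℝ) (k : ι) (r : ι → ℝ) :
    (A.updateRow k r).det = ∑ j, Matrix.adjugate A j k * r j := by
  rw [← Matrix.det_transpose, ← Matrix.updateCol_transpose, ← Matrix.cramer_apply,
    Matrix.cramer_eq_adjugate_mulVec, ← Matrix.adjugate_transpose]
  simp [Matrix.mulVec, dotProduct, Matrix.transpose_apply]

lemma pm_Nkk_ne_zero (M N : Matrix ι ι ℝ) (hM : allPrincipalInvertible M) (s : Finset ι)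
    (k : ι) (hk : k ∉ s) (hNE : N * pmE M s = pmF M s) : N k k ≠ 0 := by
  have hdet : (pmE M s).det ≠ 0 := pmE_det_ne_zero M hM s
  have hdet' : (pmE M (insert k s)).det ≠ 0 := pmE_det_ne_zero M hM (insert k s)
  have key : (pmE M (insert k s)).det = (pmE M s).det * N k k := by
    rw [pmE_insert M s k hk, det_updateRow_eq_sum]
    have h1 : N * ((pmE M s) * Matrix.adjugate (pmE M s)) = pmF M s * Matrix.adjugate (pmE M s) := by
      rw [← Matrix.mul_assoc, hNE]
    rw [Matrix.mul_adjugate, Matrix.mul_smul, Matrix.mul_one] at h1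
    have h2 := congrFun (congrFun h1 k) k
    simp only [Matrix.smul_apply, smul_eq_mul, Matrix.mul_apply] at h2
    rw [h2]
    apply Finset.sum_congr rfl
    intro j _
    rw [mul_comm]
    congr 1
    simp [pmF, hk]
  intro h0
  rw [key, h0, mul_zero] at hdet'
  exact hdet' rfl

lemma pm_step (M N : Matrix ι ι ℝ) (s : Finset ι) (k : ι) (hk : k ∉ s)
    (hNE : N * pmE M s = pmF M s) (hNkk : N k k ≠ 0) :
    invStep N k * pmE M (insert k s) = pmF M (insert k s) := by
  have hNEk : ∀ i j, ∑ l, N i l * pmE M s l j = pmF M s i j := by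
    intro i j
    have := congrFun (congrFun hNE i) j
    simpa [Matrix.mul_apply] using this
  ext i j
  rw [Matrix.mul_apply]
  have hsplit : ∀ g : ι → ℝ, ∑ l, g l = g k + ∑ l ∈ Finset.univ.erase k, g l := by
    intro g
    exact (Finset.add_sum_erase _ g (Finset.mem_univ k)).symm
  have hE'k : pmE M (insert k s) k j = M k j := by simp [pmE]
  have hEk : pmE M s k j = if k = j then 1 else 0 := by simp [pmE, hk]
  have hFk : pmF M s k j = M k j := by simp [pmF, hk]
  have erase_sum : ∀ v : ι → ℝ,
      ∑ l ∈ Finset.univ.erase k, v l * pmE M (insert k s) l j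
        = (∑ l, v l * pmE M s l j) - v k * pmE M s k j := by
    intro v
    rw [hsplit (fun l => v l * pmE M s l j)]
    have h : ∑ l ∈ Finset.univ.erase k, v l * pmE M (insert k s) l j
        = ∑ l ∈ Finset.univ.erase k, v l * pmE M s l j := by
      apply Finset.sum_congr rfl
      intro l hl
      have hl' := Finset.ne_of_mem_erase hl
      simp [pmE, Finset.mem_insert, hl']
    rw [h]; ring
  by_cases hik : i = k
  · subst hik
    have e1 : ∑ l ∈ Finset.univ.erase i, invStep N i i l * pmE M (insert i s) l j
        = (-(1 / N i i)) * ∑ l ∈ Finset.univ.erase i, N i l * pmE M (insert i s) l j := by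
      rw [Finset.mul_sum]
      apply Finset.sum_congr rfl
      intro l hl
      have hl' := Finset.ne_of_mem_erase hl
      have : invStep N i i l = -(N i l) / N i i := by simp [invStep, hl']
      rw [this]
      ring
    rw [hsplit (fun l => invStep N i i l * pmE M (insert i s) l j), e1,
      erase_sum (N i), hNEk, hFk, hEk, hE'k]
    have h2 : invStep N i i i = 1 / N i i := by simp [invStep]
    have h3 : pmF M (insert i s) i j = if i = j then 1 else 0 := by
      simp [pmF, Finset.mem_insert]
    rw [h2, h3]
    by_cases hij : i = j
    · subst hij
      simp only [if_pos rfl]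
      field_simp
      simp only [if_pos trivial]
      ring
    · simp only [if_neg hij]
      ring
  · have e1 : ∑ l ∈ Finset.univ.erase k, invStep N k i l * pmE M (insert k s) l j
        = (∑ l ∈ Finset.univ.erase k, N i l * pmE M (insert k s) l j)
          - (N i k / N k k) * ∑ l ∈ Finset.univ.erase k, N k l * pmE M (insert k s) l j := by
      rw [Finset.mul_sum, ← Finset.sum_sub_distrib]
      apply Finset.sum_congr rfl
      intro l hl
      have hl' := Finset.ne_of_mem_erase hl
      have : invStep N k i l = N i l - N i k * N k l / N k k := by simp [invStep, hik, hl']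
      rw [this]
      ring
    rw [hsplit (fun l => invStep N k i l * pmE M (insert k s) l j), e1,
      erase_sum (N i), erase_sum (N k), hNEk, hNEk, hFk, hEk, hE'k]
    have h2 : invStep N k i k = N i k / N k k := by simp [invStep, hik]
    have h3 : pmF M (insert k s) i j = pmF M s i j := by
      simp [pmF, Finset.mem_insert, hik]
    rw [h2, h3]
    by_cases hkj : k = j
    · subst hkj
      simp only [if_pos rfl]
      field_simp
      ring
    · simp only [if_neg hkj]
      ring

lemma pm_main (M : Matrix ι ι ℝ) (hM : allPrincipalInvertible M) :
    ∀ l : List ι, l.Nodup → invList l M * pmE M l.toFinset = pmF M l.toFinset := by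
  intro l
  induction l using List.reverseRecOn with
  | nil =>
    intro _
    have h1 : pmE M (([] : List ι).toFinset) = 1 := by
      ext i j; simp [pmE, Matrix.one_apply]
    have h2 : pmF M (([] : List ι).toFinset) = M := by
      ext i j; simp [pmF]
    rw [h1, h2, Matrix.mul_one]
    rfl
  | append_singleton l k ih =>
    intro hnd
    rw [List.nodup_append] at hnd
    obtain ⟨h1, -, hdisj⟩ := hnd
    have hk : k ∉ l.toFinset := by
      simp only [List.mem_toFinset]
      intro hmem
      exact hdisj k hmem k (List.mem_singleton_self k) rfl
    have hts : (l ++ [k]).toFinset = insert k l.toFinset := by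
      ext x; simp [or_comm]
    have hfold : invList (l ++ [k]) M = invStep (invList l M) k := by
      simp [invList, List.foldl_append]
    have hNE := ih h1
    have hNkk := pm_Nkk_ne_zero M (invList l M) hM l.toFinset k hk hNE
    rw [hts, hfold]
    exact pm_step M (invList l M) l.toFinset k hk hNE hNkk

end Aux

/-- partial inversion of a 2×2 block matrix with respect to the first
block `a` of the partition yields the blocks
`(M_aa⁻¹, -M_aa⁻¹ M_ab; M_ba M_aa⁻¹, M_bb - M_ba M_aa⁻¹ M_ab)`. -/
theorem invList_blocks {α β : Type*} [Fintype α] [Fintype β] [DecidableEq α] [DecidableEq β]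
    (M : Matrix (α ⊕ β) (α ⊕ β) ℝ) (hM : allPrincipalInvertible M)
    (hMaa : IsUnit M.toBlocks₁₁.det)
    (la : List (α ⊕ β)) (hna : la.Nodup)
    (hmem : ∀ x : α ⊕ β, x ∈ la ↔ ∃ y : α, x = Sum.inl y) :
    invList la M =
      Matrix.fromBlocks
        (M.toBlocks₁₁)⁻¹
        (-((M.toBlocks₁₁)⁻¹ * M.toBlocks₁₂))
        (M.toBlocks₂₁ * (M.toBlocks₁₁)⁻¹)
        (M.toBlocks₂₂ - M.toBlocks₂₁ * (M.toBlocks₁₁)⁻¹ * M.toBlocks₁₂) := by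
  have hinl : ∀ y : α, Sum.inl y ∈ la.toFinset := by
    intro y
    rw [List.mem_toFinset, hmem]
    exact ⟨y, rfl⟩
  have hinr : ∀ y : β, Sum.inr y ∉ la.toFinset := by
    intro y h
    rw [List.mem_toFinset, hmem] at h
    obtain ⟨z, hz⟩ := h
    exact nomatch hz
  have hE : pmE M la.toFinset =
      Matrix.fromBlocks M.toBlocks₁₁ M.toBlocks₁₂ 0 1 := by
    ext i j
    cases i with
    | inl i =>
      cases j with
      | inl j => simp [pmE, hinl i, Matrix.toBlocks₁₁]
      | inr j => simp [pmE, hinl i, Matrix.toBlocks₁₂]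
    | inr i =>
      cases j with
      | inl j => simp [pmE, hinr i]
      | inr j => simp [pmE, hinr i, Matrix.one_apply]
  have hF : pmF M la.toFinset =
      Matrix.fromBlocks 1 0 M.toBlocks₂₁ M.toBlocks₂₂ := by
    ext i j
    cases i with
    | inl i =>
      cases j with
      | inl j => simp [pmF, hinl i, Matrix.one_apply]
      | inr j => simp [pmF, hinl i]
    | inr i =>
      cases j with
      | inl j => simp [pmF, hinr i, Matrix.toBlocks₂₁]
      | inr j => simp [pmF, hinr i, Matrix.toBlocks₂₂]
  have hmain := pm_main M hM la hna
  rw [hE, hF] at hmain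
  have htarget :
      Matrix.fromBlocks
        (M.toBlocks₁₁)⁻¹
        (-((M.toBlocks₁₁)⁻¹ * M.toBlocks₁₂))
        (M.toBlocks₂₁ * (M.toBlocks₁₁)⁻¹)
        (M.toBlocks₂₂ - M.toBlocks₂₁ * (M.toBlocks₁₁)⁻¹ * M.toBlocks₁₂)
      * Matrix.fromBlocks M.toBlocks₁₁ M.toBlocks₁₂ 0 1
      = Matrix.fromBlocks 1 0 M.toBlocks₂₁ M.toBlocks₂₂ := by
    have hinv : (M.toBlocks₁₁)⁻¹ * M.toBlocks₁₁ = 1 := Matrix.nonsing_inv_mul _ hMaa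
    have b11 : (M.toBlocks₁₁)⁻¹ * M.toBlocks₁₁
        + -((M.toBlocks₁₁)⁻¹ * M.toBlocks₁₂) * (0 : Matrix β α ℝ) = 1 := by
      rw [Matrix.mul_zero, add_zero, hinv]
    have b12 : (M.toBlocks₁₁)⁻¹ * M.toBlocks₁₂
        + -((M.toBlocks₁₁)⁻¹ * M.toBlocks₁₂) * (1 : Matrix β β ℝ) = 0 := by
      rw [Matrix.mul_one, add_neg_cancel]
    have b21 : M.toBlocks₂₁ * (M.toBlocks₁₁)⁻¹ * M.toBlocks₁₁
        + (M.toBlocks₂₂ - M.toBlocks₂₁ * (M.toBlocks₁₁)⁻¹ * M.toBlocks₁₂) * (0 : Matrix β α ℝ)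
        = M.toBlocks₂₁ := by
      rw [Matrix.mul_zero, add_zero, Matrix.mul_assoc, hinv, Matrix.mul_one]
    have b22 : M.toBlocks₂₁ * (M.toBlocks₁₁)⁻¹ * M.toBlocks₁₂
        + (M.toBlocks₂₂ - M.toBlocks₂₁ * (M.toBlocks₁₁)⁻¹ * M.toBlocks₁₂) * (1 : Matrix β β ℝ)
        = M.toBlocks₂₂ := by
      rw [Matrix.mul_one]
      abel
    rw [Matrix.fromBlocks_multiply, b11, b12, b21, b22]
  have hdet : IsUnit (Matrix.fromBlocks M.toBlocks₁₁ M.toBlocks₁₂ 0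
      (1 : Matrix β β ℝ)).det := by
    rw [← hE]
    exact isUnit_iff_ne_zero.mpr (pmE_det_ne_zero M hM la.toFinset)
  calc invList la M
      = invList la M * Matrix.fromBlocks M.toBlocks₁₁ M.toBlocks₁₂ 0 1
        * (Matrix.fromBlocks M.toBlocks₁₁ M.toBlocks₁₂ 0 1)⁻¹ :=
        (Matrix.mul_nonsing_inv_cancel_right _ _ hdet).symm
    _ = _ * Matrix.fromBlocks M.toBlocks₁₁ M.toBlocks₁₂ 0 1
        * (Matrix.fromBlocks M.toBlocks₁₁ M.toBlocks₁₂ 0 1)⁻¹ := by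
        rw [hmain, htarget]
    _ = _ := Matrix.mul_nonsing_inv_cancel_right _ _ hdet
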